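/- Let R be a commutative ring, f = f₃Y₁³ + f₂Y₁²Y₂ + f₁Y₁Y₂² + f₀Y₂³ a binary cubic form over R, and A = ((a, b), (c, d)) ∈ GL₂(R). Define the twisted action A∗f = (det A)⁻¹ · f(aY₁ + cY₂, bY₁ + dY₂). Then the cubic ring S_{A∗f} associated to A∗f is isomorphic, as an R-algebra, to the cubic ring S_f associated to f. -/

import Mathlib

/-- The multiplication of the cubic ring `S_f` associated to the binary cubic form
`f = f₃Y₁³ + f₂Y₁²Y₂ + f₁Y₁Y₂² + f₀Y₂³`, on coordinates with respect to its basis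
`(1, α, β)`: `α·β = −f₀f₃`, `α² = −f₁f₃ + f₂α − f₃β`, `β² = −f₀f₂ + f₀α − f₁β`. -/
def cubicMul {R : Type*} [CommRing R] (f₀ f₁ f₂ f₃ : R) (x y : Fin 3 → R) : Fin 3 → R :=
  ![x 0 * y 0 - f₁ * f₃ * (x 1 * y 1) - f₀ * f₃ * (x 1 * y 2 + x 2 * y 1)
      - f₀ * f₂ * (x 2 * y 2),
    x 0 * y 1 + x 1 * y 0 + f₂ * (x 1 * y 1) + f₀ * (x 2 * y 2),
    x 0 * y 2 + x 2 * y 0 - f₃ * (x 1 * y 1) - f₁ * (x 2 * y 2)]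

set_option maxHeartbeats 1000000

/-- Auxiliary linear equivalence used in `stmt_5`. -/
def cubicEquivAux {R : Type*} [CommRing R] (lam mu a b c d v : R)
    (hv : v * (a * d - b * c) = 1) : (Fin 3 → R) ≃ₗ[R] (Fin 3 → R) where
  toFun z := ![z 0 + lam * z 1 + mu * z 2, a * z 1 + c * z 2, b * z 1 + d * z 2]
  invFun w := ![w 0 - lam * (v * (d * w 1 - c * w 2)) - mu * (v * (a * w 2 - b * w 1)),
    v * (d * w 1 - c * w 2), v * (a * w 2 - b * w 1)]
  map_add' z w := by funext i; fin_cases i <;> simp <;> ring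
  map_smul' r z := by funext i; fin_cases i <;> simp <;> ring
  left_inv z := by
    funext i
    fin_cases i <;> simp
    · linear_combination (-(lam * z 1 + mu * z 2)) * hv
    · linear_combination (z 1) * hv
    · linear_combination (z 2) * hv
  right_inv w := by
    funext i
    fin_cases i <;> simp
    · linear_combination (lam * v * (d * w 1 - c * w 2) + mu * v * (a * w 2 - b * w 1)) * hv * 0
    · linear_combination (w 1) * hv
    · linear_combination (w 2) * hv

@[simp] lemma cubicEquivAux_apply {R : Type*} [CommRing R] (lam mu a b c d v : R)
    (hv : v * (a * d - b * c) = 1) (z : Fin 3 → R) :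
    cubicEquivAux lam mu a b c d v hv z
      = ![z 0 + lam * z 1 + mu * z 2, a * z 1 + c * z 2, b * z 1 + d * z 2] := rfl




/-- Let `A = ((a,b),(c,d)) ∈ GL₂(R)` (so its determinant `a*d - b*c` is a unit `u`), and
let `f' = A∗f = (det A)⁻¹ · f(aY₁ + cY₂, bY₁ + dY₂)` be the twist of the binary cubic
form `f = f₃Y₁³ + f₂Y₁²Y₂ + f₁Y₁Y₂² + f₀Y₂³` (its coefficients `f₀', f₁', f₂', f₃'` are
pinned down by the four displayed equations, obtained by expanding
`f(aY₁ + cY₂, bY₁ + dY₂)` and dividing by `det A`).  Then the cubic ring `S_{A∗f}` is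
isomorphic as an `R`-algebra to `S_f`:  there is an `R`-linear equivalence of the
underlying modules carrying `1` to `1` and intertwining the two multiplications. -/
theorem stmt_5 (R : Type*) [CommRing R] (f₀ f₁ f₂ f₃ f₀' f₁' f₂' f₃' a b c d : R)
    (u : Rˣ) (hdet : (u : R) = a * d - b * c)
    (h3 : (u : R) * f₃' = f₃ * a ^ 3 + f₂ * a ^ 2 * b + f₁ * a * b ^ 2 + f₀ * b ^ 3)
    (h2 : (u : R) * f₂' = 3 * f₃ * a ^ 2 * c + f₂ * (a ^ 2 * d + 2 * a * b * c)
            + f₁ * (2 * a * b * d + b ^ 2 * c) + 3 * f₀ * b ^ 2 * d)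
    (h1 : (u : R) * f₁' = 3 * f₃ * a * c ^ 2 + f₂ * (2 * a * c * d + b * c ^ 2)
            + f₁ * (a * d ^ 2 + 2 * b * c * d) + 3 * f₀ * b * d ^ 2)
    (h0 : (u : R) * f₀' = f₃ * c ^ 3 + f₂ * c ^ 2 * d + f₁ * c * d ^ 2 + f₀ * d ^ 3) :
    ∃ e : (Fin 3 → R) ≃ₗ[R] (Fin 3 → R),
      e ![1, 0, 0] = ![1, 0, 0] ∧
      ∀ x y : Fin 3 → R,
        e (cubicMul f₀' f₁' f₂' f₃' x y) = cubicMul f₀ f₁ f₂ f₃ (e x) (e y) := by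

  set v : R := ((u⁻¹ : Rˣ) : R) with hvdef
  have hvu : v * (u : R) = 1 := u.inv_mul
  have hv : v * (a * d - b * c) = 1 := by rw [← hdet]; exact hvu
  have e3 : f₃' = v * (f₃ * a ^ 3 + f₂ * a ^ 2 * b + f₁ * a * b ^ 2 + f₀ * b ^ 3) := by
    rw [← h3, ← mul_assoc, hvu, one_mul]
  have e2 : f₂' = v * (3 * f₃ * a ^ 2 * c + f₂ * (a ^ 2 * d + 2 * a * b * c)
      + f₁ * (2 * a * b * d + b ^ 2 * c) + 3 * f₀ * b ^ 2 * d) := by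
    rw [← h2, ← mul_assoc, hvu, one_mul]
  have e1 : f₁' = v * (3 * f₃ * a * c ^ 2 + f₂ * (2 * a * c * d + b * c ^ 2)
      + f₁ * (a * d ^ 2 + 2 * b * c * d) + 3 * f₀ * b * d ^ 2) := by
    rw [← h1, ← mul_assoc, hvu, one_mul]
  have e0 : f₀' = v * (f₃ * c ^ 3 + f₂ * c ^ 2 * d + f₁ * c * d ^ 2 + f₀ * d ^ 3) := by
    rw [← h0, ← mul_assoc, hvu, one_mul]
  subst e3; subst e2; subst e1; subst e0
  refine ⟨cubicEquivAux (v * (f₃ * a^2*c + f₂*a*b*c + f₁*a*b*d + f₀*b^2*d))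
      (-(v * (f₃*a*c^2 + f₂*a*c*d + f₁*b*c*d + f₀*b*d^2))) a b c d v hv, ?_, ?_⟩
  · funext i
    fin_cases i <;> simp
  · intro x y
    funext i
    fin_cases i <;> simp [cubicMul]
    · linear_combination ((-1) * f₁ * f₃ * c^2 * x 2 * y 2 + f₁ * f₃ * b * c^3 * v * x 2 * y 2 + (-1) * f₁ * f₃ * a * c * x 2 * y 1 + (-1) * f₁ * f₃ * a * c * x 1 * y 2 + (-1) * f₁ * f₃ * a * c^2 * d * v * x 2 * y 2 + f₁ * f₃ * a * b * c^2 * v * x 2 * y 1 + f₁ * f₃ * a * b * c^2 * v * x 1 * y 2 + (-1) * f₁ * f₃ * a^2 * x 1 * y 1 + (-1) * f₁ * f₃ * a^2 * c * d * v * x 2 * y 1 + (-1) * f₁ * f₃ * a^2 * c * d * v * x 1 * y 2 + f₁ * f₃ * a^2 * b * c * v * x 1 * y 1 + (-1) * f₁ * f₃ * a^3 * d * v * x 1 * y 1 + (-2) * f₀ * f₃ * c * d * x 2 * y 2 + (-1) * f₀ * f₃ * b * c * x 2 * y 1 + (-1) * f₀ * f₃ * b * c * x 1 * y 2 + 2 *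 f₀ * f₃ * b * c^2 * d * v * x 2 * y 2 + f₀ * f₃ * b^2 * c^2 * v * x 2 * y 1 + f₀ * f₃ * b^2 * c^2 * v * x 1 * y 2 + (-1) * f₀ * f₃ * a * d * x 2 * y 1 + (-1) * f₀ * f₃ * a * d * x 1 * y 2 + (-2) * f₀ * f₃ * a * c * d^2 * v * x 2 * y 2 + (-2) * f₀ * f₃ * a * b * x 1 * y 1 + 2 * f₀ * f₃ * a * b^2 * c * v * x 1 * y 1 + (-1) * f₀ * f₃ * a^2 * d^2 * v * x 2 * y 1 + (-1) * f₀ * f₃ * a^2 * d^2 * v * x 1 * y 2 + (-2) * f₀ * f₃ * a^2 * b * d * v * x 1 * y 1 + (-1) * f₀ * f₂ * d^2 * x 2 * y 2 + (-1) * f₀ * f₂ * b * d * x 2 * y 1 + (-1) * f₀ * f₂ * b * d * x 1 * y 2 + f₀ * f₂ * b * c * d^2 * v * x 2 * y 2 + (-1) * f₀ * f₂ * b^2 * x 1 * y 1 + f₀ * f₂ * b^2 * c * d * v * x 2 * y 1 + f₀ * f₂ * b^2 * c * d * v * x 1 * y 2 + f₀ * f₂ * b^3 * c * v * x 1 * y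 1 + (-1) * f₀ * f₂ * a * d^3 * v * x 2 * y 2 + (-1) * f₀ * f₂ * a * b * d^2 * v * x 2 * y 1 + (-1) * f₀ * f₂ * a * b * d^2 * v * x 1 * y 2 + (-1) * f₀ * f₂ * a * b^2 * d * v * x 1 * y 1) * hv
    · linear_combination (f₂ * c^2 * x 2 * y 2 + f₂ * a * c * x 2 * y 1 + f₂ * a * c * x 1 * y 2 + f₂ * a^2 * x 1 * y 1 + f₀ * d^2 * x 2 * y 2 + f₀ * b * d * x 2 * y 1 + f₀ * b * d * x 1 * y 2 + f₀ * b^2 * x 1 * y 1) * hv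
    · linear_combination ((-1) * f₃ * c^2 * x 2 * y 2 + (-1) * f₃ * a * c * x 2 * y 1 + (-1) * f₃ * a * c * x 1 * y 2 + (-1) * f₃ * a^2 * x 1 * y 1 + (-1) * f₁ * d^2 * x 2 * y 2 + (-1) * f₁ * b * d * x 2 * y 1 + (-1) * f₁ * b * d * x 1 * y 2 + (-1) * f₁ * b^2 * x 1 * y 1) * hv
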